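/- arXiv:1405.6802 — 3 statements merged into one kernel-verified Lean document; each statement's English description precedes it below -/
import Mathlib

section
/- Let B > 0, μ > 0, μ₁ > 0 and g be real numbers, set b_n = B·μ^n·μ₁^{√n}·n^g for n ≥ 1 and r_n = b_n/b_{n−1}. Define the modified ratios intercept_n = (√n·r_n − √(n−1)·r_{n−1})/(√n − √(n−1)) for n ≥ 3. Then intercept_n = μ·(1 + O(1/n)) as n → ∞; that is, intercept_n/μ − 1 is O(n^{−1}). -/
set_option maxHeartbeats 1000000
open Real

noncomputable def hfun (L g x : ℝ) : ℝ :=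
  L * (Real.sqrt x - Real.sqrt (x-1)) + g * (Real.log x - Real.log (x-1))

noncomputable def hfun' (L g x : ℝ) : ℝ :=
  L * (1/(2*Real.sqrt x) - 1/(2*Real.sqrt (x-1))) + g * (1/x - 1/(x-1))

lemma bound_aux (L g : ℝ) {x : ℝ} (hx : (|L| + |g| + 1)^2 + 1 ≤ x) :
    |Real.exp (hfun L g x) * (1 + 2*x*(hfun' L g x)) - 1| ≤
      (6*(|L|+|g|+1)^2 + 18*(|L|+|g|+1))/x := by
  obtain ⟨M, hMdef⟩ : ∃ M, |L| + |g| + 1 = M := ⟨_, rfl⟩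
  rw [hMdef] at hx ⊢
  have habsL : 0 ≤ |L| := abs_nonneg L
  have habsg : 0 ≤ |g| := abs_nonneg g
  have hM1 : 1 ≤ M := by linarith
  have hx2 : 2 ≤ x := by nlinarith
  have hx1 : 1 ≤ x - 1 := by nlinarith
  have hxm : M^2 ≤ x - 1 := by linarith
  have hxpos : (0:ℝ) < x := by linarith
  have hx1pos : (0:ℝ) < x - 1 := by linarith
  have hsx : Real.sqrt x * Real.sqrt x = x := Real.mul_self_sqrt hxpos.le
  have hsx1 : Real.sqrt (x-1) * Real.sqrt (x-1) = x - 1 := Real.mul_self_sqrt hx1pos.le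
  have hsxpos : 0 < Real.sqrt x := Real.sqrt_pos.2 hxpos
  have hsx1pos : 0 < Real.sqrt (x-1) := Real.sqrt_pos.2 hx1pos
  have hs1ge1 : 1 ≤ Real.sqrt (x-1) := by nlinarith [hsx1, hsx1pos]
  have hsgeM : M ≤ Real.sqrt (x-1) := by nlinarith [hsx1, hxm, hsx1pos, hM1]
  have hba : Real.sqrt (x-1) ≤ Real.sqrt x := Real.sqrt_le_sqrt (by linarith)
  -- bound on S = sqrt x - sqrt (x-1)
  have hkey : (Real.sqrt x - Real.sqrt (x-1)) * (Real.sqrt x + Real.sqrt (x-1)) = 1 := by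
    linear_combination hsx - hsx1
  have hS0 : 0 ≤ Real.sqrt x - Real.sqrt (x-1) := by linarith
  have hS : Real.sqrt x - Real.sqrt (x-1) ≤ 1/(2*Real.sqrt (x-1)) := by
    rw [le_div_iff₀ (by positivity)]
    nlinarith [hkey, sq_nonneg (Real.sqrt x - Real.sqrt (x-1))]
  -- bound on ℓ = log x - log (x-1)
  have hl0 : 0 ≤ Real.log x - Real.log (x-1) := by
    have := Real.log_le_log hx1pos (by linarith : x - 1 ≤ x)
    linarith
  have hl : Real.log x - Real.log (x-1) ≤ 1/(x-1) := by
    have h1 : Real.log x - Real.log (x-1) = Real.log (x/(x-1)) := by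
      rw [Real.log_div hxpos.ne' hx1pos.ne']
    have h2 : Real.log (x/(x-1)) ≤ x/(x-1) - 1 := Real.log_le_sub_one_of_pos (by positivity)
    have h3 : x/(x-1) - 1 = 1/(x-1) := by field_simp; ring
    rw [h1]; rw [h3] at h2; exact h2
  -- bound on |hfun|
  have ht0 : (0:ℝ) ≤ 1/Real.sqrt (x-1) := by positivity
  have hhabs : |hfun L g x| ≤ M/Real.sqrt (x-1) := by
    have e1 : Real.sqrt x - Real.sqrt (x-1) ≤ 1/Real.sqrt (x-1) := by
      refine hS.trans ?_
      rw [div_le_div_iff₀ (by positivity) (by positivity)]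
      nlinarith
    have e2 : Real.log x - Real.log (x-1) ≤ 1/Real.sqrt (x-1) := by
      refine hl.trans ?_
      rw [div_le_div_iff₀ (by positivity) (by positivity)]
      nlinarith [hsx1]
    calc |hfun L g x| ≤ |L * (Real.sqrt x - Real.sqrt (x-1))| + |g * (Real.log x - Real.log (x-1))| := by
          simp only [hfun]; exact abs_add_le _ _
      _ = |L| * (Real.sqrt x - Real.sqrt (x-1)) + |g| * (Real.log x - Real.log (x-1)) := by
          rw [abs_mul, abs_mul, abs_of_nonneg hS0, abs_of_nonneg hl0]
      _ ≤ |L| * (1/Real.sqrt (x-1)) + |g| * (1/Real.sqrt (x-1)) := by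
          exact add_le_add (mul_le_mul_of_nonneg_left e1 habsL) (mul_le_mul_of_nonneg_left e2 habsg)
      _ = (|L| + |g|) * (1/Real.sqrt (x-1)) := by ring
      _ ≤ M * (1/Real.sqrt (x-1)) := by
          apply mul_le_mul_of_nonneg_right _ ht0
          linarith
      _ = M / Real.sqrt (x-1) := by rw [mul_one_div]
  have hh1 : |hfun L g x| ≤ 1 := by
    refine hhabs.trans ?_
    rw [div_le_one (by positivity)]; exact hsgeM
  have hh2 : (hfun L g x)^2 ≤ 2*M^2/x := by
    have h4 : (hfun L g x)^2 ≤ (M/Real.sqrt (x-1))^2 := by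
      rw [← sq_abs]
      exact pow_le_pow_left₀ (abs_nonneg _) hhabs 2
    have e : (M/Real.sqrt (x-1))^2 = M^2/(x-1) := by
      rw [div_pow]; congr 1; linear_combination hsx1
    rw [e] at h4
    refine h4.trans ?_
    rw [div_le_div_iff₀ hx1pos hxpos]
    nlinarith [sq_nonneg M]
  -- A bound
  have hpp : (2*Real.sqrt x*Real.sqrt (x-1))^2 = 4*x*(x-1) := by
    linear_combination (4*Real.sqrt (x-1)*Real.sqrt (x-1))*hsx + (4*x)*hsx1
  have hppos : 0 ≤ 2*Real.sqrt x*Real.sqrt (x-1) := by positivity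
  have hp : 2*Real.sqrt x*Real.sqrt (x-1) ≤ 2*x - 1 := by
    nlinarith [sq_nonneg (Real.sqrt x - Real.sqrt (x-1)), hsx, hsx1]
  have hq : (2*x-1) - 2*Real.sqrt x*Real.sqrt (x-1) ≤ 1/x := by
    rw [le_div_iff₀ hxpos]
    have haux : (0:ℝ) ≤ ((2*x-1) - 2*Real.sqrt x*Real.sqrt (x-1)) *
        ((2*x-1) + 2*Real.sqrt x*Real.sqrt (x-1) - x) :=
      mul_nonneg (by linarith) (by nlinarith [hppos])
    nlinarith [hpp, haux]
  have hAval : (Real.sqrt x - Real.sqrt (x-1)) + 2*x*(1/(2*Real.sqrt x) - 1/(2*Real.sqrt (x-1)))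
      = (2*Real.sqrt x*Real.sqrt (x-1) - (2*x-1))/Real.sqrt (x-1) := by
    rw [eq_div_iff hsx1pos.ne']
    field_simp
    linear_combination (4*(1-x) - Real.sqrt (x-1) + 4*Real.sqrt (x-1)^2)*hsx + (-4*Real.sqrt x^2 + 4*x - Real.sqrt x)*hsx1
  have hA : |(Real.sqrt x - Real.sqrt (x-1)) + 2*x*(1/(2*Real.sqrt x) - 1/(2*Real.sqrt (x-1)))| ≤ 1/x := by
    rw [hAval, abs_div, abs_of_pos hsx1pos, abs_of_nonpos (by linarith)]
    calc -(2*Real.sqrt x*Real.sqrt (x-1) - (2*x-1))/Real.sqrt (x-1)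
        = (2*x-1 - 2*Real.sqrt x*Real.sqrt (x-1))/Real.sqrt (x-1) := by ring_nf
      _ ≤ (2*x-1 - 2*Real.sqrt x*Real.sqrt (x-1)) := div_le_self (by linarith) hs1ge1
      _ ≤ 1/x := hq
  -- B bound
  have hBval : 2*x*(1/x - 1/(x-1)) = -(2/(x-1)) := by
    field_simp
    ring
  have hB : |(Real.log x - Real.log (x-1)) + 2*x*(1/x - 1/(x-1))| ≤ 6/x := by
    have h6 : 3/(x-1) ≤ 6/x := by
      rw [div_le_div_iff₀ hx1pos hxpos]; nlinarith
    have h20 : (0:ℝ) ≤ 2/(x-1) := by positivity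
    have h21 : 2/(x-1) ≤ 3/(x-1) := by
      rw [div_le_div_iff₀ hx1pos hx1pos]; nlinarith
    have h22 : 1/(x-1) ≤ 3/(x-1) := by
      rw [div_le_div_iff₀ hx1pos hx1pos]; nlinarith
    have hBb : |(Real.log x - Real.log (x-1)) + 2*x*(1/x - 1/(x-1))| ≤ 3/(x-1) := by
      rw [hBval, abs_le]
      constructor
      · linarith
      · linarith
    linarith
  -- combined bound on h + 2x h'
  have hsum : |hfun L g x + 2*x*(hfun' L g x)| ≤ 6*M/x := by
    have e : hfun L g x + 2*x*(hfun' L g x) =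
        L*((Real.sqrt x - Real.sqrt (x-1)) + 2*x*(1/(2*Real.sqrt x) - 1/(2*Real.sqrt (x-1))))
        + g*((Real.log x - Real.log (x-1)) + 2*x*(1/x - 1/(x-1))) := by
      simp only [hfun, hfun']; ring
    rw [e]
    have hx0 : (0:ℝ) ≤ 1/x := by positivity
    calc |L*((Real.sqrt x - Real.sqrt (x-1)) + 2*x*(1/(2*Real.sqrt x) - 1/(2*Real.sqrt (x-1))))
        + g*((Real.log x - Real.log (x-1)) + 2*x*(1/x - 1/(x-1)))|
        ≤ |L*((Real.sqrt x - Real.sqrt (x-1)) + 2*x*(1/(2*Real.sqrt x) - 1/(2*Real.sqrt (x-1))))|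
          + |g*((Real.log x - Real.log (x-1)) + 2*x*(1/x - 1/(x-1)))| := abs_add_le _ _
      _ = |L| * |(Real.sqrt x - Real.sqrt (x-1)) + 2*x*(1/(2*Real.sqrt x) - 1/(2*Real.sqrt (x-1)))|
          + |g| * |(Real.log x - Real.log (x-1)) + 2*x*(1/x - 1/(x-1))| := by rw [abs_mul, abs_mul]
      _ ≤ |L| * (1/x) + |g| * (6/x) :=
          add_le_add (mul_le_mul_of_nonneg_left hA habsL) (mul_le_mul_of_nonneg_left hB habsg)
      _ = (|L| + 6*|g|) * (1/x) := by ring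
      _ ≤ (6*M) * (1/x) := by
          apply mul_le_mul_of_nonneg_right _ hx0
          linarith
      _ = 6*M/x := by rw [mul_one_div]
  -- final assembly
  have e1 : |Real.exp (hfun L g x) - 1 - hfun L g x| ≤ (hfun L g x)^2 :=
    Real.abs_exp_sub_one_sub_id_le hh1
  have e2 : |Real.exp (hfun L g x) - 1| ≤ 2*|hfun L g x| := Real.abs_exp_sub_one_le hh1
  have e3 : Real.exp (hfun L g x) ≤ 3 := by
    have h30 : Real.exp (hfun L g x) ≤ Real.exp 1 := Real.exp_le_exp.2 (le_of_abs_le hh1)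
    have h9 := Real.exp_one_lt_d9
    linarith
  have e4 : 0 < Real.exp (hfun L g x) := Real.exp_pos _
  have decomp : Real.exp (hfun L g x) * (1 + 2*x*(hfun' L g x)) - 1 =
      ((Real.exp (hfun L g x) - 1 - hfun L g x) - hfun L g x * (Real.exp (hfun L g x) - 1))
      + Real.exp (hfun L g x) * (hfun L g x + 2*x*(hfun' L g x)) := by ring
  rw [decomp]
  have t1 : |(Real.exp (hfun L g x) - 1 - hfun L g x) - hfun L g x * (Real.exp (hfun L g x) - 1)|
      ≤ 3*(hfun L g x)^2 := by
    calc |(Real.exp (hfun L g x) - 1 - hfun L g x) - hfun L g x * (Real.exp (hfun L g x) - 1)|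
        ≤ |Real.exp (hfun L g x) - 1 - hfun L g x| + |hfun L g x * (Real.exp (hfun L g x) - 1)| :=
          abs_sub _ _
      _ = |Real.exp (hfun L g x) - 1 - hfun L g x| + |hfun L g x| * |Real.exp (hfun L g x) - 1| := by
          rw [abs_mul]
      _ ≤ (hfun L g x)^2 + |hfun L g x| * (2*|hfun L g x|) :=
          add_le_add e1 (mul_le_mul_of_nonneg_left e2 (abs_nonneg _))
      _ = 3*(hfun L g x)^2 := by rw [show |hfun L g x| * (2*|hfun L g x|) = 2*(|hfun L g x|^2) from by ring, sq_abs]; ring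
  have t2 : |Real.exp (hfun L g x) * (hfun L g x + 2*x*(hfun' L g x))| ≤ 3 * (6*M/x) := by
    rw [abs_mul, abs_of_pos e4]
    have h40 : Real.exp (hfun L g x) * |hfun L g x + 2*x*(hfun' L g x)| ≤ 3 * |hfun L g x + 2*x*(hfun' L g x)| :=
      mul_le_mul_of_nonneg_right e3 (abs_nonneg _)
    refine h40.trans ?_
    exact mul_le_mul_of_nonneg_left hsum (by norm_num)
  calc |((Real.exp (hfun L g x) - 1 - hfun L g x) - hfun L g x * (Real.exp (hfun L g x) - 1))
      + Real.exp (hfun L g x) * (hfun L g x + 2*x*(hfun' L g x))|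
      ≤ |(Real.exp (hfun L g x) - 1 - hfun L g x) - hfun L g x * (Real.exp (hfun L g x) - 1)|
        + |Real.exp (hfun L g x) * (hfun L g x + 2*x*(hfun' L g x))| := abs_add_le _ _
    _ ≤ 3*(hfun L g x)^2 + 3*(6*M/x) := add_le_add t1 t2
    _ ≤ 3*(2*M^2/x) + 3*(6*M/x) := by linarith [hh2]
    _ = (6*M^2 + 18*M)/x := by ring

lemma hfun_hasDerivAt (L g : ℝ) {x : ℝ} (hx : 1 < x) :
    HasDerivAt (hfun L g) (hfun' L g x) x := by
  have h0 : x ≠ 0 := by positivity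
  have h1 : x - 1 ≠ 0 := by intro h; nlinarith [h]
  have d1 : HasDerivAt Real.sqrt (1/(2*Real.sqrt x)) x := Real.hasDerivAt_sqrt h0
  have d2 : HasDerivAt (fun y : ℝ => Real.sqrt (y-1)) (1/(2*Real.sqrt (x-1))) x := by
    have := (((hasDerivAt_id x).sub_const 1).sqrt h1)
    simpa using this
  have d3 : HasDerivAt Real.log (1/x) x := by
    simpa [one_div] using Real.hasDerivAt_log h0
  have d4 : HasDerivAt (fun y : ℝ => Real.log (y-1)) (1/(x-1)) x := by
    have := (((hasDerivAt_id x).sub_const 1).log h1)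
    simpa using this
  exact ((d1.sub d2).const_mul L).add ((d3.sub d4).const_mul g)

open Asymptotics Filter

/-- The modified ratios (square-root intercepts) converge to μ at rate O(1/n). -/
theorem intercept_estimate (B μ μ₁ g : ℝ) (hB : 0 < B) (hμ : 0 < μ) (hμ₁ : 0 < μ₁)
    (b r intercept : ℕ → ℝ)
    (hb : ∀ n : ℕ, 1 ≤ n → b n = B * μ ^ n * μ₁ ^ Real.sqrt n * (n : ℝ) ^ g)
    (hr : ∀ n : ℕ, 2 ≤ n → r n = b n / b (n - 1))
    (hint : ∀ n : ℕ, 3 ≤ n → intercept n =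
      (Real.sqrt n * r n - Real.sqrt (n - 1 : ℕ) * r (n - 1)) /
        (Real.sqrt n - Real.sqrt (n - 1 : ℕ))) :
    (fun n : ℕ => intercept n / μ - 1) =O[atTop] fun n : ℕ => ((n : ℝ))⁻¹ := by
  set L := Real.log μ₁ with hLdef
  have hre : ∀ m : ℕ, 2 ≤ m → r m = μ * Real.exp (hfun L g m) := by
    intro m hm
    have h1m : 1 ≤ m := by omega
    have h1m1 : 1 ≤ m - 1 := by omega
    have hc : ((m-1:ℕ):ℝ) = (m:ℝ) - 1 := by
      rw [Nat.cast_sub h1m, Nat.cast_one]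
    have h2r : (2:ℝ) ≤ (m:ℝ) := by exact_mod_cast hm
    have hmpos : (0:ℝ) < m := by linarith
    have hm1pos : (0:ℝ) < (m:ℝ) - 1 := by linarith
    have hpow : μ ^ m = μ ^ (m-1) * μ := by
      conv_lhs => rw [show m = (m-1)+1 from by omega]
      rw [pow_succ]
    rw [hr m hm, hb m h1m, hb (m-1) h1m1, hc, hpow,
      Real.rpow_def_of_pos hμ₁, Real.rpow_def_of_pos hμ₁,
      Real.rpow_def_of_pos hmpos, Real.rpow_def_of_pos hm1pos]
    simp only [hfun]
    have hsplit : Real.exp (L * (Real.sqrt (m:ℝ) - Real.sqrt ((m:ℝ)-1)) +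
          g * (Real.log (m:ℝ) - Real.log ((m:ℝ)-1)))
        * (Real.exp (L * Real.sqrt ((m:ℝ)-1)) * Real.exp (Real.log ((m:ℝ)-1) * g))
        = Real.exp (L * Real.sqrt (m:ℝ)) * Real.exp (Real.log (m:ℝ) * g) := by
      rw [← Real.exp_add, ← Real.exp_add, ← Real.exp_add]; congr 1; ring
    rw [div_eq_iff (mul_ne_zero (mul_ne_zero (mul_ne_zero hB.ne'
      (pow_ne_zero _ hμ.ne')) (Real.exp_ne_zero _)) (Real.exp_ne_zero _))]
    linear_combination (-(B*μ^(m-1)*μ)) * hsplit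
  -- constants
  obtain ⟨M, hMdef⟩ : ∃ M, |L| + |g| + 1 = M := ⟨_, rfl⟩
  have hM1 : (1:ℝ) ≤ M := by
    have := abs_nonneg L; have := abs_nonneg g; linarith
  rw [Asymptotics.isBigO_iff]
  refine ⟨2*(6*M^2 + 18*M), ?_⟩
  filter_upwards [Filter.eventually_ge_atTop (max 3 ⌈M^2+2⌉₊)] with n hn
  have hn3 : 3 ≤ n := le_trans (le_max_left _ _) hn
  have hnM : M^2 + 2 ≤ (n:ℝ) := Nat.ceil_le.mp (le_trans (le_max_right _ _) hn)
  have hc1 : ((n-1:ℕ):ℝ) = (n:ℝ) - 1 := by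
    rw [Nat.cast_sub (by omega : 1 ≤ n), Nat.cast_one]
  have haM : M^2 + 1 ≤ (n:ℝ) - 1 := by linarith
  have ha2 : (2:ℝ) ≤ (n:ℝ) - 1 := by nlinarith
  have hnpos : (0:ℝ) < n := by linarith
  have hrn : r n = μ * Real.exp (hfun L g n) := hre n (by omega)
  have hrn1 : r (n-1) = μ * Real.exp (hfun L g ((n:ℝ)-1)) := by
    have := hre (n-1) (by omega)
    rwa [hc1] at this
  have hsa : Real.sqrt ((n:ℝ)-1) < Real.sqrt n := Real.sqrt_lt_sqrt (by linarith) (by linarith)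
  have hsd : (0:ℝ) < Real.sqrt n - Real.sqrt ((n:ℝ)-1) := by linarith
  have hintn : intercept n = μ * ((Real.sqrt n * Real.exp (hfun L g n)
      - Real.sqrt ((n:ℝ)-1) * Real.exp (hfun L g ((n:ℝ)-1)))
      / (Real.sqrt n - Real.sqrt ((n:ℝ)-1))) := by
    rw [hint n hn3, hc1, hrn, hrn1]
    ring
  -- MVT
  have hGderiv : ∀ x : ℝ, 1 < x → HasDerivAt (fun y => Real.sqrt y * Real.exp (hfun L g y))
      (1/(2*Real.sqrt x) * Real.exp (hfun L g x)
        + Real.sqrt x * (Real.exp (hfun L g x) * hfun' L g x)) x := by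
    intro x hx
    have hx0 : x ≠ 0 := by positivity
    exact (Real.hasDerivAt_sqrt hx0).mul ((hfun_hasDerivAt L g hx).exp)
  have hlt : (n:ℝ) - 1 < (n:ℝ) := by linarith
  obtain ⟨c, hcmem, heq⟩ := exists_ratio_hasDerivAt_eq_ratio_slope
    (fun y => Real.sqrt y * Real.exp (hfun L g y))
    (fun x => 1/(2*Real.sqrt x) * Real.exp (hfun L g x)
        + Real.sqrt x * (Real.exp (hfun L g x) * hfun' L g x)) hlt
    (fun x hx => (hGderiv x (by simp only [Set.mem_Icc] at hx; linarith [hx.1])).continuousAt.continuousWithinAt)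
    (fun x hx => hGderiv x (by simp only [Set.mem_Ioo] at hx; linarith [hx.1]))
    Real.sqrt (fun x => 1/(2*Real.sqrt x))
    Real.continuous_sqrt.continuousOn
    (fun x hx => Real.hasDerivAt_sqrt (by simp only [Set.mem_Ioo] at hx; nlinarith [hx.1]))
  simp only [Set.mem_Ioo] at hcmem
  obtain ⟨hcl, hcr⟩ := hcmem
  have hcpos : (0:ℝ) < c := by linarith
  have hscpos : 0 < Real.sqrt c := Real.sqrt_pos.2 hcpos
  have hcc : Real.sqrt c * Real.sqrt c = c := Real.mul_self_sqrt hcpos.le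
  have hval : (2*Real.sqrt c) * (1/(2*Real.sqrt c) * Real.exp (hfun L g c)
        + Real.sqrt c * (Real.exp (hfun L g c) * hfun' L g c))
      = Real.exp (hfun L g c) * (1 + 2*c*(hfun' L g c)) := by
    field_simp
    linear_combination (2*(hfun' L g c)) * hcc
  have hkey : (Real.sqrt (n:ℝ) * Real.exp (hfun L g (n:ℝ))
      - Real.sqrt ((n:ℝ)-1) * Real.exp (hfun L g ((n:ℝ)-1)))
      / (Real.sqrt (n:ℝ) - Real.sqrt ((n:ℝ)-1))
      = Real.exp (hfun L g c) * (1 + 2*c*(hfun' L g c)) := by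
    rw [div_eq_iff hsd.ne', ← hval]
    have h2 := congrArg (fun t => t * (2*Real.sqrt c)) heq
    field_simp at h2
    have hinv : (2*Real.sqrt c) * (1/(2*Real.sqrt c)) = 1 := by field_simp
    linear_combination (-1 : ℝ) * h2 - (Real.exp (hfun L g c) * (Real.sqrt (n:ℝ) - Real.sqrt ((n:ℝ)-1))) * hinv
  have hfinal : intercept n / μ - 1 = Real.exp (hfun L g c) * (1 + 2*c*(hfun' L g c)) - 1 := by
    rw [hintn, mul_div_cancel_left₀ _ hμ.ne', hkey]
  -- bound
  have hbd := bound_aux L g (x := c) (by rw [hMdef]; linarith)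
  rw [hMdef] at hbd
  have hCpos : (0:ℝ) ≤ 6*M^2 + 18*M := by nlinarith
  have h5 : (6*M^2 + 18*M)/c ≤ 2*(6*M^2 + 18*M) * ((n:ℝ))⁻¹ := by
    have h5a : (6*M^2 + 18*M)/c ≤ 2*(6*M^2 + 18*M)/(n:ℝ) := by
      rw [div_le_div_iff₀ hcpos hnpos]
      nlinarith [mul_nonneg hCpos (by linarith : (0:ℝ) ≤ 2*c - (n:ℝ))]
    calc (6*M^2 + 18*M)/c ≤ 2*(6*M^2 + 18*M)/(n:ℝ) := h5a
      _ = 2*(6*M^2 + 18*M) * ((n:ℝ))⁻¹ := div_eq_mul_inv _ _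
  rw [Real.norm_eq_abs, Real.norm_eq_abs, hfinal]
  calc |Real.exp (hfun L g c) * (1 + 2*c*(hfun' L g c)) - 1| ≤ (6*M^2 + 18*M)/c := hbd
    _ ≤ 2*(6*M^2 + 18*M) * ((n:ℝ))⁻¹ := h5
    _ ≤ 2*(6*M^2 + 18*M) * |((n:ℝ))⁻¹| := by
        rw [abs_of_pos (by positivity : (0:ℝ) < ((n:ℝ))⁻¹)]
end

section
/- Let B > 0, μ > 0, μ₁ > 0, g be real numbers and 0 < σ < 1, and set b_n = B·μ^n·μ₁^{n^σ}·n^g for n ≥ 1. Then the second-order ratio r_{σ,n} = (b_n·b_{n−2})/(b_{n−1})^2 satisfies, as n → ∞, r_{σ,n} − 1 − σ(σ−1)·(log μ₁)·n^{σ−2} = O(n^{−2}); in particular this expansion does not involve μ. -/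
open Asymptotics Filter Set

lemma rpow_mvt (p a b : ℝ) (h0 : 0 < a) (hab : a < b) :
    ∃ c ∈ Ioo a b, b ^ p - a ^ p = p * c ^ (p - 1) * (b - a) := by
  obtain ⟨c, hc, hc'⟩ := exists_hasDerivAt_eq_slope (fun x => x ^ p)
    (fun x => p * x ^ (p - 1)) hab
    (fun x hx => (Real.hasDerivAt_rpow_const (p := p)
      (Or.inl (by nlinarith [hx.1]))).continuousAt.continuousWithinAt)
    (fun x hx => Real.hasDerivAt_rpow_const (Or.inl (by nlinarith [hx.1])))
  refine ⟨c, hc, ?_⟩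
  rw [eq_div_iff (sub_ne_zero.mpr hab.ne')] at hc'
  linarith [hc']

lemma second_diff (p a : ℝ) (ha : 3 ≤ a) :
    ∃ d ∈ Ioo (a - 2) a,
      a ^ p - 2 * (a - 1) ^ p + (a - 2) ^ p = p * (p - 1) * d ^ (p - 2) := by
  have key : ∀ x : ℝ, 2 ≤ x →
      HasDerivAt (fun x : ℝ => x ^ p - (x - 1) ^ p)
        (p * x ^ (p - 1) - p * (x - 1) ^ (p - 1)) x := by
    intro x hx
    have h1 : HasDerivAt (fun x : ℝ => x ^ p) (p * x ^ (p - 1)) x :=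
      Real.hasDerivAt_rpow_const (Or.inl (by linarith))
    have h2 : HasDerivAt (fun x : ℝ => (x - 1) ^ p)
        (1 * p * (x - 1) ^ (p - 1)) x :=
      HasDerivAt.rpow_const ((hasDerivAt_id x).sub_const 1) (Or.inl (by norm_num; linarith))
    have : HasDerivAt (fun x : ℝ => x ^ p - (x - 1) ^ p) _ x := h1.sub h2
    convert this using 1
    ring
  obtain ⟨c, hc, hc'⟩ := exists_hasDerivAt_eq_slope
    (fun x : ℝ => x ^ p - (x - 1) ^ p)
    (fun x => p * x ^ (p - 1) - p * (x - 1) ^ (p - 1)) (by linarith : a - 1 < a)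
    (fun x hx => (key x (by simp at hx; linarith [hx.1])).continuousAt.continuousWithinAt)
    (fun x hx => key x (by linarith [hx.1]))
  obtain ⟨d, hd, hd'⟩ := rpow_mvt (p - 1) (c - 1) c (by linarith [hc.1]) (by linarith)
  refine ⟨d, ⟨by linarith [hd.1, hc.1], by linarith [hd.2, hc.2]⟩, ?_⟩
  rw [show a - 1 - 1 = a - 2 by ring, show a - (a - 1) = 1 by ring, div_one] at hc'
  rw [show c - (c - 1) = 1 by ring, mul_one, show p - 1 - 1 = p - 2 by ring] at hd'
  linear_combination p * hd' - hc'

lemma log4 (a b c d : ℝ) (ha : 0 < a) (hb : 0 < b) (hc : 0 < c) (hd : 0 < d) :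
    Real.log (a * b * c * d) = Real.log a + Real.log b + Real.log c + Real.log d := by
  rw [Real.log_mul (by positivity) (by positivity),
      Real.log_mul (by positivity) (by positivity),
      Real.log_mul (by positivity) (by positivity)]

set_option maxHeartbeats 2000000 in
/-- Second-order ratio expansion for `b_n = B μ^n μ₁^{n^σ} n^g`:
`b_n b_{n-2}/b_{n-1}² = 1 + σ(σ-1) log μ₁ · n^{σ-2} + O(n^{-2})`, independently of μ. -/
theorem second_order_ratio (B μ μ₁ g σ : ℝ) (hB : 0 < B) (hμ : 0 < μ) (hμ₁ : 0 < μ₁)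
    (hσ0 : 0 < σ) (hσ1 : σ < 1)
    (b rσ : ℕ → ℝ)
    (hb : ∀ n : ℕ, 1 ≤ n → b n = B * μ ^ n * μ₁ ^ ((n : ℝ) ^ σ) * (n : ℝ) ^ g)
    (hrσ : ∀ n : ℕ, 3 ≤ n → rσ n = b n * b (n - 2) / (b (n - 1)) ^ 2) :
    (fun n : ℕ => rσ n - 1 - σ * (σ - 1) * Real.log μ₁ * (n : ℝ) ^ (σ - 2))
      =O[atTop] fun n : ℕ => (n : ℝ) ^ (-2 : ℝ) := by
  rw [isBigO_iff]
  set K := |σ * (σ - 1)| with hKdef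
  set Lm := |Real.log μ₁| with hLmdef
  set C0 := 4 * K * Lm + 2 * |g| with hC0def
  have hK0 : 0 ≤ K := abs_nonneg _
  have hLm0 : 0 ≤ Lm := abs_nonneg _
  have hC00 : 0 ≤ C0 := by positivity
  clear_value K Lm C0
  refine ⟨C0 ^ 2 + 32 * K * Lm + 2 * |g|, ?_⟩
  filter_upwards [eventually_ge_atTop (⌈C0⌉₊ + 4)] with n hn
  have hn4 : 4 ≤ n := by omega
  have hx4 : (4 : ℝ) ≤ (n : ℝ) := by exact_mod_cast hn4
  set x : ℝ := (n : ℝ) with hxdef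
  clear_value x
  have hx0 : (0 : ℝ) < x := by linarith
  have hx1 : (0 : ℝ) < x - 1 := by linarith
  have hx2 : (0 : ℝ) < x - 2 := by linarith
  have hx1' : (1 : ℝ) ≤ x := by linarith
  have hC0x : C0 ≤ x := by
    have h1 : C0 ≤ (⌈C0⌉₊ : ℝ) := Nat.le_ceil C0
    have h2 : ((⌈C0⌉₊ : ℕ) : ℝ) ≤ x := by
      rw [hxdef]; exact_mod_cast (by omega : ⌈C0⌉₊ ≤ n)
    linarith
  clear hn
  have hc1 : ((n - 1 : ℕ) : ℝ) = x - 1 := by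
    rw [Nat.cast_sub (by omega : 1 ≤ n), hxdef]; norm_num
  have hc2 : ((n - 2 : ℕ) : ℝ) = x - 2 := by
    rw [Nat.cast_sub (by omega : 2 ≤ n), hxdef]; norm_num
  set D := x ^ σ - 2 * (x - 1) ^ σ + (x - 2) ^ σ with hDdef
  set L := Real.log x + Real.log (x - 2) - 2 * Real.log (x - 1) with hLdef
  set E := Real.log μ₁ * D + g * L with hEdef
  clear_value D L E
  -- log of b
  have hlogb : ∀ m : ℕ, 1 ≤ m → Real.log (b m) =
      Real.log B + m * Real.log μ + (m : ℝ) ^ σ * Real.log μ₁ + g * Real.log m := by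
    intro m hm
    have hm0 : (0 : ℝ) < m := by exact_mod_cast hm
    rw [hb m hm, log4 _ _ _ _ hB (pow_pos hμ m) (Real.rpow_pos_of_pos hμ₁ _)
      (Real.rpow_pos_of_pos hm0 _), Real.log_pow, Real.log_rpow hμ₁, Real.log_rpow hm0]
  have hbpos : ∀ m : ℕ, 1 ≤ m → 0 < b m := by
    intro m hm
    have hm0 : (0 : ℝ) < m := by exact_mod_cast hm
    rw [hb m hm]; positivity
  -- rσ n = exp E
  have hr : rσ n = Real.exp E := by
    have hpos : 0 < b n * b (n - 2) / (b (n - 1)) ^ 2 :=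
      div_pos (mul_pos (hbpos n (by omega)) (hbpos (n - 2) (by omega)))
        (pow_pos (hbpos (n - 1) (by omega)) 2)
    rw [hrσ n (by omega), ← Real.exp_log hpos]
    congr 1
    rw [Real.log_div (mul_pos (hbpos n (by omega)) (hbpos (n - 2) (by omega))).ne'
        (pow_pos (hbpos (n - 1) (by omega)) 2).ne', Real.log_pow,
        Real.log_mul (ne_of_gt (hbpos n (by omega))) (ne_of_gt (hbpos (n - 2) (by omega))),
        hlogb n (by omega), hlogb (n - 2) (by omega), hlogb (n - 1) (by omega), hc1, hc2]
    rw [hEdef, hLdef, hDdef, hxdef]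
    push_cast [Nat.cast_sub (show 1 ≤ n by omega), Nat.cast_sub (show 2 ≤ n by omega)]
    ring
  clear hb hrσ hlogb hbpos hc1 hc2
  -- second difference of x^σ
  obtain ⟨d, hd, hDval⟩ := second_diff σ x (by linarith)
  have hd0 : 0 < d := lt_trans hx2 hd.1
  have hσ2 : σ - 2 ≤ 0 := by linarith
  have hσ3 : σ - 3 ≤ 0 := by linarith
  -- monotone rpow bounds
  have hmono1 : x ^ (σ - 2) ≤ d ^ (σ - 2) :=
    Real.rpow_le_rpow_of_nonpos hd0 hd.2.le hσ2
  have hmono2 : d ^ (σ - 2) ≤ (x - 2) ^ (σ - 2) :=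
    Real.rpow_le_rpow_of_nonpos hx2 hd.1.le hσ2
  -- (x-2)^(σ-3) ≤ 8 x^(σ-3), (x-2)^(σ-2) ≤ 4 x^(σ-2)
  have hhalf3 : (x - 2) ^ (σ - 3) ≤ 8 * x ^ (σ - 3) := by
    have h1 : (x - 2) ^ (σ - 3) ≤ (x * (1 / 2)) ^ (σ - 3) :=
      Real.rpow_le_rpow_of_nonpos (by linarith) (by linarith) hσ3
    have h2 : (x * (1 / 2)) ^ (σ - 3) = x ^ (σ - 3) * ((1 / 2 : ℝ)) ^ (σ - 3) :=
      Real.mul_rpow hx0.le (by norm_num)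
    have h3 : ((1 / 2 : ℝ)) ^ (σ - 3) = (2 : ℝ) ^ (3 - σ) := by
      rw [show (3 - σ) = -(σ - 3) by ring, Real.rpow_neg (by norm_num),
        ← Real.inv_rpow (by norm_num)]
      norm_num
    have h4 : (2 : ℝ) ^ (3 - σ) ≤ (2 : ℝ) ^ (3 : ℝ) :=
      Real.rpow_le_rpow_of_exponent_le one_le_two (by linarith)
    have h5 : (2 : ℝ) ^ (3 : ℝ) = 8 := by
      have := Real.rpow_natCast (2:ℝ) 3; norm_num at this; linarith
    have hxp : 0 ≤ x ^ (σ - 3) := (Real.rpow_pos_of_pos hx0 _).le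
    calc (x - 2) ^ (σ - 3) ≤ x ^ (σ - 3) * ((1 / 2 : ℝ)) ^ (σ - 3) := by rw [← h2]; exact h1
      _ ≤ x ^ (σ - 3) * 8 := by
          rw [h3]; exact mul_le_mul_of_nonneg_left (le_trans h4 (le_of_eq h5)) hxp
      _ = 8 * x ^ (σ - 3) := by ring
  have hhalf2 : (x - 2) ^ (σ - 2) ≤ 4 * x ^ (σ - 2) := by
    have h1 : (x - 2) ^ (σ - 2) ≤ (x * (1 / 2)) ^ (σ - 2) :=
      Real.rpow_le_rpow_of_nonpos (by linarith) (by linarith) hσ2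
    have h2 : (x * (1 / 2)) ^ (σ - 2) = x ^ (σ - 2) * ((1 / 2 : ℝ)) ^ (σ - 2) :=
      Real.mul_rpow hx0.le (by norm_num)
    have h3 : ((1 / 2 : ℝ)) ^ (σ - 2) = (2 : ℝ) ^ (2 - σ) := by
      rw [show (2 - σ) = -(σ - 2) by ring, Real.rpow_neg (by norm_num),
        ← Real.inv_rpow (by norm_num)]
      norm_num
    have h4 : (2 : ℝ) ^ (2 - σ) ≤ (2 : ℝ) ^ (2 : ℝ) :=
      Real.rpow_le_rpow_of_exponent_le one_le_two (by linarith)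
    have h5 : (2 : ℝ) ^ (2 : ℝ) = 4 := by
      have := Real.rpow_natCast (2:ℝ) 2; norm_num at this; linarith
    have hxp : 0 ≤ x ^ (σ - 2) := (Real.rpow_pos_of_pos hx0 _).le
    calc (x - 2) ^ (σ - 2) ≤ x ^ (σ - 2) * ((1 / 2 : ℝ)) ^ (σ - 2) := by rw [← h2]; exact h1
      _ ≤ x ^ (σ - 2) * 4 := by
          rw [h3]; exact mul_le_mul_of_nonneg_left (le_trans h4 (le_of_eq h5)) hxp
      _ = 4 * x ^ (σ - 2) := by ring
  -- exponent comparisons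
  have hexp2 : x ^ (σ - 3) ≤ x ^ (-2 : ℝ) :=
    Real.rpow_le_rpow_of_exponent_le hx1' (by linarith)
  have hexp1 : x ^ (σ - 2) ≤ x ^ (-1 : ℝ) :=
    Real.rpow_le_rpow_of_exponent_le hx1' (by linarith)
  have hinv1 : x ^ (-1 : ℝ) = x⁻¹ := Real.rpow_neg_one x
  have hinv2 : x ^ (-2 : ℝ) = (x ^ 2)⁻¹ := by
    rw [show (-2 : ℝ) = -(2 : ℝ) by norm_num, Real.rpow_neg hx0.le, Real.rpow_two]
  have hx2pos : (0:ℝ) < x ^ (-2 : ℝ) := Real.rpow_pos_of_pos hx0 _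
  -- bound |D - σ(σ-1)x^(σ-2)| ≤ 32 K x^(-2)
  have hDapprox : |D - σ * (σ - 1) * x ^ (σ - 2)| ≤ 32 * K * x ^ (-2 : ℝ) := by
    rw [hDdef]
    obtain ⟨e, he, heval⟩ := rpow_mvt (σ - 2) (x - 2) x hx2 (by linarith)
    have hgap : (x - 2) ^ (σ - 2) - x ^ (σ - 2) ≤ 4 * (x - 2) ^ (σ - 3) := by
      rw [show x - (x - 2) = 2 by ring, show σ - 2 - 1 = σ - 3 by ring] at heval
      have hepos : 0 < e ^ (σ - 3) := Real.rpow_pos_of_pos (lt_trans hx2 he.1) _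
      have he3 : e ^ (σ - 3) ≤ (x - 2) ^ (σ - 3) :=
        Real.rpow_le_rpow_of_nonpos hx2 he.1.le hσ3
      have h6 : (2 - σ) * 2 * e ^ (σ - 3) ≤ 4 * e ^ (σ - 3) := by
        nlinarith [mul_pos hσ0 hepos]
      linarith [heval, he3, h6]
    have habs : |d ^ (σ - 2) - x ^ (σ - 2)| ≤ (x - 2) ^ (σ - 2) - x ^ (σ - 2) := by
      rw [abs_of_nonneg (by linarith)]
      linarith
    rw [hDval, show σ * (σ - 1) * d ^ (σ - 2) - σ * (σ - 1) * x ^ (σ - 2)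
      = σ * (σ - 1) * (d ^ (σ - 2) - x ^ (σ - 2)) by ring, abs_mul]
    have : |d ^ (σ - 2) - x ^ (σ - 2)| ≤ 32 * x ^ (-2 : ℝ) := by
      calc |d ^ (σ - 2) - x ^ (σ - 2)| ≤ (x - 2) ^ (σ - 2) - x ^ (σ - 2) := habs
        _ ≤ 4 * (x - 2) ^ (σ - 3) := hgap
        _ ≤ 4 * (8 * x ^ (σ - 3)) := by linarith [hhalf3]
        _ ≤ 32 * x ^ (-2 : ℝ) := by linarith [hexp2]
    calc |σ * (σ - 1)| * |d ^ (σ - 2) - x ^ (σ - 2)| ≤ K * (32 * x ^ (-2 : ℝ)) := by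
          rw [hKdef]; exact mul_le_mul_of_nonneg_left this (abs_nonneg _)
      _ = 32 * K * x ^ (-2 : ℝ) := by ring
  -- bound |D| ≤ 4K x^(-1)
  have hDbound : |D| ≤ 4 * K * x ^ (-1 : ℝ) := by
    rw [hDdef, hDval, abs_mul]
    have h1 : |d ^ (σ - 2)| = d ^ (σ - 2) := abs_of_pos (Real.rpow_pos_of_pos hd0 _)
    rw [h1]
    have : d ^ (σ - 2) ≤ 4 * x ^ (-1 : ℝ) := by
      calc d ^ (σ - 2) ≤ (x - 2) ^ (σ - 2) := hmono2
        _ ≤ 4 * x ^ (σ - 2) := hhalf2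
        _ ≤ 4 * x ^ (-1 : ℝ) := by linarith [hexp1]
    rw [← hKdef]
    calc K * d ^ (σ - 2) ≤ K * (4 * x ^ (-1 : ℝ)) :=
          mul_le_mul_of_nonneg_left this hK0
      _ = 4 * K * x ^ (-1 : ℝ) := by ring
  -- bound |L| ≤ 2 x^(-2)
  have hLbound : |L| ≤ 2 * x ^ (-2 : ℝ) := by
    have ht0 : (0 : ℝ) < 1 / (x * (x - 2)) := by positivity
    have hLeq : L = -Real.log (1 + 1 / (x * (x - 2))) := by
      have harg : (1 : ℝ) + 1 / (x * (x - 2)) = (x - 1) ^ 2 / (x * (x - 2)) := by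
        field_simp
        ring
      rw [hLdef, harg, Real.log_div (by positivity) (by positivity),
        Real.log_pow, Real.log_mul (ne_of_gt hx0) (ne_of_gt hx2)]
      push_cast
      ring
    have hlog1 : (0 : ℝ) ≤ Real.log (1 + 1 / (x * (x - 2))) :=
      Real.log_nonneg (by linarith)
    have hlog2 : Real.log (1 + 1 / (x * (x - 2))) ≤ 1 / (x * (x - 2)) := by
      have := Real.log_le_sub_one_of_pos (show (0:ℝ) < 1 + 1 / (x * (x - 2)) by linarith)
      linarith
    have ht2 : 1 / (x * (x - 2)) ≤ 2 * x ^ (-2 : ℝ) := by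
      rw [hinv2]
      rw [div_le_iff₀ (by positivity)]
      have hxx : (0:ℝ) < x ^ 2 := by positivity
      rw [show 2 * (x ^ 2)⁻¹ * (x * (x - 2)) = 2 * (x * (x - 2)) / x ^ 2 by ring,
        le_div_iff₀ hxx]
      nlinarith
    rw [hLeq, abs_neg, abs_of_nonneg hlog1]
    linarith
  -- |E| ≤ C0 / x ≤ 1 and E² ≤ C0²/x²
  have hEbound : |E| ≤ C0 * x ^ (-1 : ℝ) := by
    have h1 : |E| ≤ Lm * |D| + |g| * |L| := by
      rw [hEdef]
      calc |Real.log μ₁ * D + g * L| ≤ |Real.log μ₁ * D| + |g * L| := abs_add_le _ _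
        _ = Lm * |D| + |g| * |L| := by rw [abs_mul, abs_mul, ← hLmdef]
    have h2 : x ^ (-2 : ℝ) ≤ x ^ (-1 : ℝ) :=
      Real.rpow_le_rpow_of_exponent_le hx1' (by norm_num)
    calc |E| ≤ Lm * (4 * K * x ^ (-1 : ℝ)) + |g| * (2 * x ^ (-2 : ℝ)) := by
          have := mul_le_mul_of_nonneg_left hDbound hLm0
          have := mul_le_mul_of_nonneg_left hLbound (abs_nonneg g)
          linarith [h1]
      _ ≤ Lm * (4 * K * x ^ (-1 : ℝ)) + |g| * (2 * x ^ (-1 : ℝ)) := by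
          nlinarith [abs_nonneg g, h2]
      _ = C0 * x ^ (-1 : ℝ) := by rw [hC0def]; ring
  have hE1 : |E| ≤ 1 := by
    have h1 : C0 * x ^ (-1 : ℝ) ≤ 1 := by
      rw [hinv1, ← div_eq_mul_inv, div_le_one hx0]
      exact hC0x
    linarith [hEbound]
  have hexpE : |Real.exp E - 1 - E| ≤ E ^ 2 := Real.abs_exp_sub_one_sub_id_le hE1
  have hE2 : E ^ 2 ≤ C0 ^ 2 * x ^ (-2 : ℝ) := by
    have h2 : E ^ 2 = |E| ^ 2 := (sq_abs E).symm
    have h3 : |E| ^ 2 ≤ (C0 * x ^ (-1 : ℝ)) ^ 2 := pow_le_pow_left₀ (abs_nonneg E) hEbound 2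
    have h4 : (C0 * x ^ (-1 : ℝ)) ^ 2 = C0 ^ 2 * x ^ (-2 : ℝ) := by
      rw [mul_pow, hinv1, hinv2]
      field_simp
    rw [h2]
    rw [h4] at h3
    exact h3
  rw [Real.norm_eq_abs, Real.norm_eq_abs, hr]
  have hsplit : Real.exp E - 1 - σ * (σ - 1) * Real.log μ₁ * x ^ (σ - 2)
      = (Real.exp E - 1 - E)
        + (Real.log μ₁ * (D - σ * (σ - 1) * x ^ (σ - 2)) + g * L) := by
    rw [hEdef]; ring
  rw [hsplit, abs_of_pos hx2pos]
  have habs2 : |Real.log μ₁ * (D - σ * (σ - 1) * x ^ (σ - 2))| ≤ Lm * (32 * K * x ^ (-2 : ℝ)) := by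
    rw [abs_mul, ← hLmdef]; exact mul_le_mul_of_nonneg_left hDapprox hLm0
  have habs3 : |g * L| ≤ |g| * (2 * x ^ (-2 : ℝ)) := by
    rw [abs_mul]; exact mul_le_mul_of_nonneg_left hLbound (abs_nonneg g)
  have ht1 := abs_add_le (Real.exp E - 1 - E)
    (Real.log μ₁ * (D - σ * (σ - 1) * x ^ (σ - 2)) + g * L)
  have ht2 := abs_add_le (Real.log μ₁ * (D - σ * (σ - 1) * x ^ (σ - 2))) (g * L)
  linarith [hexpE, hE2, habs2, habs3, ht1, ht2]
end

section
/- Let B > 0, μ > 0, μ₁ > 0 and g be real numbers, and set b_n = B·μ^n·μ₁^{√n}·n^g for n ≥ 1. Define c_n = 2·n^{3/2}·((log b_n)/√n − (log b_{n−1})/√(n−1)) for n ≥ 2. Then there is a real constant C such that c_n − n·log μ + g·log n converges to C as n → ∞; equivalently, the transformed sequence d_n = exp(c_n) satisfies d_n·n^g/μ^n → e^C > 0, so that (d_n) has the pure algebraic-singularity asymptotic form D·μ^n·n^{−g} with no stretched-exponential factor. -/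
open Filter

open Real

private lemma tendsto_one_sub_inv : Tendsto (fun x : ℝ => 1 - 1/x) atTop (nhds 1) := by
  simpa using tendsto_const_nhds.sub (tendsto_inv_atTop_zero (𝕜 := ℝ))

private lemma tendsto_v : Tendsto (fun x : ℝ => Real.sqrt (1 - 1/x)) atTop (nhds 1) := by
  have := (Real.continuous_sqrt.tendsto 1).comp tendsto_one_sub_inv
  simpa [Function.comp_def] using this


private lemma aux1 : Tendsto (fun x : ℝ => 2*x - 2*x*Real.sqrt x/Real.sqrt (x-1)) atTop (nhds (-1)) := by
  have h2 : Tendsto (fun x : ℝ => (1 - 1/x) + Real.sqrt (1 - 1/x)) atTop (nhds 2) := by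
    have := tendsto_one_sub_inv.add tendsto_v
    norm_num at this
    simpa using this
  have hlim : Tendsto (fun x : ℝ => -2 / ((1 - 1/x) + Real.sqrt (1 - 1/x))) atTop (nhds (-1)) := by
    have := (tendsto_const_nhds (x := (-2:ℝ))).div h2 (by norm_num)
    simpa [Pi.div_def] using this
  refine hlim.congr' ?_
  filter_upwards [eventually_ge_atTop (2:ℝ)] with x hx
  have hx0 : (0:ℝ) < x := by linarith
  have hx1 : (0:ℝ) < x - 1 := by linarith
  have hs0 : 0 < Real.sqrt x := Real.sqrt_pos.mpr hx0
  have ht0 : 0 < Real.sqrt (x-1) := Real.sqrt_pos.mpr hx1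
  have hs2 : Real.sqrt x ^2 = x := Real.sq_sqrt hx0.le
  have ht2 : Real.sqrt (x-1) ^2 = x - 1 := Real.sq_sqrt hx1.le
  have hv : Real.sqrt (1 - 1/x) = Real.sqrt (x-1)/Real.sqrt x := by
    rw [show (1 - 1/x) = (x-1)/x by field_simp, Real.sqrt_div hx1.le]
  rw [hv]
  set s := Real.sqrt x
  set t := Real.sqrt (x-1)
  have hd : (1 - 1/x) + t/s ≠ 0 := by
    have : 0 < (1 - 1/x) + t/s := by
      have : (0:ℝ) < 1 - 1/x := by
        rw [sub_pos]; rw [div_lt_one hx0]; linarith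
      positivity
    linarith
  field_simp
  linear_combination (-x)*ht2 + (-1+x)*hs2

private lemma aux2 : Tendsto (fun x : ℝ => 2*x*Real.sqrt x*(Real.sqrt x - Real.sqrt (x-1)) - x) atTop (nhds (1/4)) := by
  have h2 : Tendsto (fun x : ℝ => (1 + Real.sqrt (1 - 1/x))^2) atTop (nhds 4) := by
    have := ((tendsto_const_nhds (x := (1:ℝ))).add tendsto_v).pow 2
    norm_num at this
    simpa only [one_div] using this
  have hlim : Tendsto (fun x : ℝ => 1 / (1 + Real.sqrt (1 - 1/x))^2) atTop (nhds (1/4)) := by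
    have := h2.inv₀ (by norm_num)
    simpa [one_div] using this
  refine hlim.congr' ?_
  filter_upwards [eventually_ge_atTop (2:ℝ)] with x hx
  have hx0 : (0:ℝ) < x := by linarith
  have hx1 : (0:ℝ) < x - 1 := by linarith
  have hs0 : 0 < Real.sqrt x := Real.sqrt_pos.mpr hx0
  have ht0 : 0 < Real.sqrt (x-1) := Real.sqrt_pos.mpr hx1
  have hs2 : Real.sqrt x ^2 = x := Real.sq_sqrt hx0.le
  have ht2 : Real.sqrt (x-1) ^2 = x - 1 := Real.sq_sqrt hx1.le
  have hv : Real.sqrt (1 - 1/x) = Real.sqrt (x-1)/Real.sqrt x := by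
    rw [show (1 - 1/x) = (x-1)/x by field_simp, Real.sqrt_div hx1.le]
  rw [hv]
  set s := Real.sqrt x
  set t := Real.sqrt (x-1)
  have hd : (0:ℝ) < 1 + t/s := by positivity
  field_simp
  ring_nf
  linear_combination (-2*s*x*t - 2*x*s^2 + 1 - x)*hs2 + (2*s*x*t + 2*s^2*x + x)*ht2


private lemma aux3 : Tendsto (fun x : ℝ =>
    2*x*Real.log x - 2*x*Real.sqrt x*Real.log (x-1)/Real.sqrt (x-1) + Real.log x) atTop (nhds 2) := by
  have h2 : Tendsto (fun x : ℝ => (1 - 1/x) + Real.sqrt (1 - 1/x)) atTop (nhds 2) := by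
    have := tendsto_one_sub_inv.add tendsto_v
    convert this using 2
    norm_num
  have hA : Tendsto (fun x : ℝ => Real.log x / x) atTop (nhds 0) := by
    simpa using Real.isLittleO_log_id_atTop.tendsto_div_nhds_zero
  have hden : Tendsto (fun x : ℝ => Real.sqrt (1 - 1/x) + 1) atTop (nhds 2) := by
    have := tendsto_v.add (tendsto_const_nhds (x := (1:ℝ)))
    convert this using 2
    norm_num
  have hnum : Tendsto (fun x : ℝ => -1/(Real.sqrt (1 - 1/x) + 1) - 1) atTop (nhds (-3/2)) := by
    have := ((tendsto_const_nhds (x := (-1:ℝ))).div hden (by norm_num)).sub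
      (tendsto_const_nhds (x := (1:ℝ)))
    convert this using 2
    all_goals norm_num
  have hB : Tendsto (fun x : ℝ =>
      (-1/(Real.sqrt (1 - 1/x) + 1) - 1)/((1 - 1/x) + Real.sqrt (1 - 1/x))) atTop
      (nhds (-3/8 * 2)) := by
    have := hnum.div h2 (by norm_num)
    convert this using 2
    all_goals norm_num
  have hC : Tendsto (fun x : ℝ => x * Real.log (1 - 1/x)) atTop (nhds (-1)) := by
    have := Real.tendsto_mul_log_one_add_div_atTop (-1)
    exact this.congr (fun x => by rw [show (1:ℝ) + -1/x = 1 - 1/x by ring])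
  have h2v : Tendsto (fun x : ℝ => 2/Real.sqrt (1 - 1/x)) atTop (nhds 2) := by
    have := (tendsto_const_nhds (x := (2:ℝ))).div tendsto_v (by norm_num)
    convert this using 2
    all_goals norm_num
  have hlim : Tendsto (fun x : ℝ =>
      (Real.log x / x) * ((-1/(Real.sqrt (1 - 1/x) + 1) - 1)/((1 - 1/x) + Real.sqrt (1 - 1/x)))
      - (2/Real.sqrt (1 - 1/x)) * (x * Real.log (1 - 1/x))) atTop (nhds 2) := by
    have := (hA.mul hB).sub (h2v.mul hC)
    convert this using 2
    norm_num
  refine hlim.congr' ?_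
  filter_upwards [eventually_ge_atTop (2:ℝ)] with x hx
  have hx0 : (0:ℝ) < x := by linarith
  have hx1 : (0:ℝ) < x - 1 := by linarith
  have h12 : (0:ℝ) < 1 - 1/x := by
    rw [sub_pos, div_lt_one hx0]; linarith
  have hs0 : 0 < Real.sqrt x := Real.sqrt_pos.mpr hx0
  have ht0 : 0 < Real.sqrt (x-1) := Real.sqrt_pos.mpr hx1
  have hs2 : Real.sqrt x ^2 = x := Real.sq_sqrt hx0.le
  have ht2 : Real.sqrt (x-1) ^2 = x - 1 := Real.sq_sqrt hx1.le
  have hv : Real.sqrt (1 - 1/x) = Real.sqrt (x-1)/Real.sqrt x := by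
    rw [show (1 - 1/x) = (x-1)/x by field_simp, Real.sqrt_div hx1.le]
  have hlog : Real.log (x-1) = Real.log x + Real.log (1 - 1/x) := by
    rw [show x - 1 = x*(1-1/x) by field_simp, Real.log_mul hx0.ne' h12.ne']
  rw [hv, hlog]
  set s := Real.sqrt x
  set t := Real.sqrt (x-1)
  set lx := Real.log x
  set L := Real.log (1 - 1/x)
  field_simp
  ring_nf
  linear_combination (lx*((-1)*t + (-1)*t*x + (2)*t*x^2 + (-2)*s*x + (2)*s*x^2))*hs2 + (lx*((-2)*s*x^2 + (-1)*t*x + (-2)*t*x^2))*ht2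

private lemma key_id (x s t lB lm l1 G lx lx1 : ℝ) (hs : s ≠ 0) (ht : t ≠ 0)
    (hsx : s^2 = x) (htx : t^2 = x - 1) :
    2*(x*s)*((lB + x*lm + s*l1 + G*lx)/s - (lB + (x-1)*lm + t*l1 + G*lx1)/t) - x*lm + G*lx
    = lB*(2*x - 2*x*s/t) + lm*(2*x*s*(s-t) - x) + G*(2*x*lx - 2*x*s*lx1/t + lx) := by
  subst hsx
  rw [← htx]
  field_simp
  ring

/-- Removing the stretched-exponential factor: for `b_n = B μ^n μ₁^{√n} n^g` and
`c_n = 2 n^{3/2} (log b_n/√n − log b_{n-1}/√(n-1))`, the sequence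
`c_n − n log μ + g log n` converges to some constant `C`, so that `d_n = exp c_n`
has the pure algebraic form `d_n ~ e^C μ^n n^{-g}`. -/
theorem renormalised_series (B μ μ₁ g : ℝ) (hB : 0 < B) (hμ : 0 < μ) (hμ₁ : 0 < μ₁)
    (b c : ℕ → ℝ)
    (hb : ∀ n : ℕ, 1 ≤ n → b n = B * μ ^ n * μ₁ ^ Real.sqrt n * (n : ℝ) ^ g)
    (hc : ∀ n : ℕ, 2 ≤ n → c n =
      2 * (n : ℝ) ^ ((3 : ℝ) / 2) *
        (Real.log (b n) / Real.sqrt n - Real.log (b (n - 1)) / Real.sqrt (n - 1 : ℕ))) :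
    ∃ C : ℝ,
      Tendsto (fun n : ℕ => c n - n * Real.log μ + g * Real.log n) atTop (nhds C) ∧
      Tendsto (fun n : ℕ => Real.exp (c n) * (n : ℝ) ^ g / μ ^ n) atTop
        (nhds (Real.exp C)) ∧
      0 < Real.exp C := by
  set C := -Real.log B + Real.log μ/4 + 2*g with hCdef
  have hnat : Tendsto (fun n : ℕ => (n : ℝ)) atTop atTop := tendsto_natCast_atTop_atTop
  have hP := aux1.comp hnat
  have hQ := aux2.comp hnat
  have hR := aux3.comp hnat
  have hcomb : Tendsto (fun n : ℕ =>
      Real.log B * (2*(n:ℝ) - 2*(n:ℝ)*Real.sqrt (n:ℝ)/Real.sqrt ((n:ℝ)-1))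
      + Real.log μ * (2*(n:ℝ)*Real.sqrt (n:ℝ)*(Real.sqrt (n:ℝ) - Real.sqrt ((n:ℝ)-1)) - (n:ℝ))
      + g * (2*(n:ℝ)*Real.log (n:ℝ) - 2*(n:ℝ)*Real.sqrt (n:ℝ)*Real.log ((n:ℝ)-1)/Real.sqrt ((n:ℝ)-1)
          + Real.log (n:ℝ))) atTop (nhds C) := by
    have h := ((hP.const_mul (Real.log B)).add (hQ.const_mul (Real.log μ))).add (hR.const_mul g)
    have h' := h.congr (fun n => rfl)
    convert h' using 2
    · rfl
    rw [hCdef]; ring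
  have h1 : Tendsto (fun n : ℕ => c n - n * Real.log μ + g * Real.log n) atTop (nhds C) := by
    refine hcomb.congr' ?_
    filter_upwards [eventually_ge_atTop (2:ℕ)] with n hn
    have hn1 : (1:ℕ) ≤ n := by omega
    have hx2 : (2:ℝ) ≤ (n:ℝ) := by exact_mod_cast hn
    have hcast : ((n-1 : ℕ) : ℝ) = (n:ℝ) - 1 := by
      rw [Nat.cast_sub hn1]; norm_num
    set x := (n:ℝ) with hxdef
    have hx0 : (0:ℝ) < x := by linarith
    have hx1 : (0:ℝ) < x - 1 := by linarith
    have hs0 : 0 < Real.sqrt x := Real.sqrt_pos.mpr hx0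
    have ht0 : 0 < Real.sqrt (x-1) := Real.sqrt_pos.mpr hx1
    have hs2 : Real.sqrt x ^2 = x := Real.sq_sqrt hx0.le
    have ht2 : Real.sqrt (x-1) ^2 = x - 1 := Real.sq_sqrt hx1.le
    have h32 : x ^ ((3:ℝ)/2) = x * Real.sqrt x := by
      rw [show (3:ℝ)/2 = 1 + 1/2 by norm_num, Real.rpow_add hx0, Real.rpow_one,
        ← Real.sqrt_eq_rpow]
    have lbn : Real.log (b n) = Real.log B + x * Real.log μ + Real.sqrt x * Real.log μ₁
        + g * Real.log x := by
      rw [hb n hn1, Real.log_mul (by positivity) (by positivity),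
        Real.log_mul (by positivity) (by positivity),
        Real.log_mul (by positivity) (by positivity),
        Real.log_pow, Real.log_rpow hμ₁, Real.log_rpow hx0]
    have lbn1 : Real.log (b (n-1)) = Real.log B + (x-1) * Real.log μ
        + Real.sqrt (x-1) * Real.log μ₁ + g * Real.log (x-1) := by
      rw [hb (n-1) (by omega), hcast, Real.log_mul (by positivity) (by positivity),
        Real.log_mul (by positivity) (by positivity),
        Real.log_mul (by positivity) (by positivity),
        Real.log_pow, Real.log_rpow hμ₁, Real.log_rpow hx1, hcast]
    have key := key_id x (Real.sqrt x) (Real.sqrt (x-1)) (Real.log B) (Real.log μ)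
      (Real.log μ₁) g (Real.log x) (Real.log (x-1)) hs0.ne' ht0.ne' hs2 ht2
    rw [hc n hn, lbn, lbn1, hcast, h32, ← hxdef]
    linear_combination -key
  refine ⟨C, h1, ?_, Real.exp_pos _⟩
  have h2 : Tendsto (fun n : ℕ => Real.exp (c n - n * Real.log μ + g * Real.log n)) atTop
      (nhds (Real.exp C)) := ((Real.continuous_exp.tendsto C).comp h1).congr (fun n => rfl)
  refine h2.congr' ?_
  filter_upwards [eventually_ge_atTop (1:ℕ)] with n hn
  have hx0 : (0:ℝ) < (n:ℝ) := by exact_mod_cast Nat.pos_of_ne_zero (by omega)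
  rw [Real.exp_add, Real.exp_sub, Real.exp_nat_mul, Real.exp_log hμ,
    show g * Real.log (n:ℝ) = Real.log (n:ℝ) * g by ring,
    ← Real.rpow_def_of_pos hx0]
  ring
end
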